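/- Consider an ODE system where, for each element e, dE^e/dt = Σ_{g ∈ G^e} Δ^{-g}, and for every mortar g the sum of contributions from its two sides satisfies Δ^{-g} + Δ^{+g} = -(α/2)(⟦p⟧ᵀ A ⟦p⟧ + ⟦v_n⟧ᵀ A ⟦v_n⟧) with A symmetric positive semidefinite and α ≥ 0, while boundary mortars satisfy Δ^{-g} = -α (v_n⁻)ᵀ A v_n⁻. Then the total energy E(t) = Σ_e E^e(t) is nonincreasing: E(t) ≤ E(0) for all t ≥ 0. -/

import Mathlib

open Matrix

/-- Semidiscrete energy stability: if each element energy satisfies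
`dE^e/dt = Σ_{g ∈ G^e} Δ^{-g}` (with `Δ^{+g}` contributions on the plus side of interior
mortars), interior mortar contributions sum to
`-(α/2)(⟦p⟧ᵀ A ⟦p⟧ + ⟦v_n⟧ᵀ A ⟦v_n⟧)` with `A` positive semidefinite and `α ≥ 0`,
and boundary mortars satisfy `Δ^{-g} = -α (v_n⁻)ᵀ A v_n⁻`, then the total energy is
nonincreasing: `E(t) ≤ E(0)` for `t ≥ 0`. -/
theorem total_energy_nonincreasing
    {E G : Type*} [Fintype E] [Fintype G] [DecidableEq E] {k : ℕ}
    (interior : G → Prop) [DecidablePred interior]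
    (elmMinus elmPlus : G → E)
    (Δm Δp : G → ℝ → ℝ)
    (En : E → ℝ → ℝ)
    (α : ℝ) (hα : 0 ≤ α)
    (A : G → Matrix (Fin k) (Fin k) ℝ)
    (hA : ∀ g, (A g).PosSemidef)
    (jp jv vb : G → ℝ → (Fin k → ℝ))
    (hEn : ∀ e t, HasDerivAt (En e)
      (∑ g : G, ((if elmMinus g = e then Δm g t else 0) +
        (if interior g ∧ elmPlus g = e then Δp g t else 0))) t)
    (hInt : ∀ g, interior g → ∀ t,
      Δm g t + Δp g t =
        -(α / 2) * (jp g t ⬝ᵥ (A g) *ᵥ (jp g t) + jv g t ⬝ᵥ (A g) *ᵥ (jv g t)))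
    (hBnd : ∀ g, ¬ interior g → ∀ t, Δm g t = -α * (vb g t ⬝ᵥ (A g) *ᵥ (vb g t))) :
    ∀ t, 0 ≤ t → (∑ e, En e t) ≤ ∑ e, En e 0 := by
  have hD : ∀ s, HasDerivAt (fun u => ∑ e, En e u)
      (∑ g : G, (Δm g s + if interior g then Δp g s else 0)) s := by
    intro s
    have h := HasDerivAt.fun_sum (fun e (_ : e ∈ Finset.univ) => hEn e s)
    refine HasDerivAt.congr_deriv h (Eq.symm ?_)
    rw [Finset.sum_comm]
    refine Finset.sum_congr rfl fun g _ => ?_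
    rw [Finset.sum_add_distrib]
    congr 1
    · simp [Finset.sum_ite_eq]
    · by_cases hg : interior g <;> simp [hg, Finset.sum_ite_eq]
  have hneg : ∀ s, (∑ g : G, (Δm g s + if interior g then Δp g s else 0)) ≤ 0 := by
    intro s
    refine Finset.sum_nonpos fun g _ => ?_
    have hq : ∀ x : Fin k → ℝ, 0 ≤ x ⬝ᵥ (A g) *ᵥ x := fun x => by simpa using (hA g).dotProduct_mulVec_nonneg x
    by_cases hg : interior g
    · simp only [hg, if_true]
      rw [hInt g hg s]
      have := add_nonneg (hq (jp g s)) (hq (jv g s))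
      nlinarith
    · simp only [hg, if_false, add_zero]
      rw [hBnd g hg s]
      nlinarith [hq (vb g s)]
  intro t ht
  have hanti : Antitone (fun u => ∑ e, En e u) := by
    refine antitone_of_deriv_nonpos (fun u => (hD u).differentiableAt) ?_
    intro u
    rw [(hD u).deriv]
    exact hneg u
  exact hanti ht
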